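/- If A, B are n×n matrices over a commutative ELT ring and B is invertible (in the monoid of matrices over R̄), then det(AB) = det(A)·det(B). -/

import Mathlib

/-- ELT addition on pairs (tangible value, layer). -/
def eltAdd {F L : Type*} [LinearOrder F] [Add L] (x y : F × L) : F × L :=
  if y.1 < x.1 then x else if x.1 < y.1 then y else (x.1, x.2 + y.2)

/-- ELT multiplication on pairs (tangible value, layer). -/
def eltMul {F L : Type*} [Add F] [Mul L] (x y : F × L) : F × L :=
  (x.1 + y.1, x.2 * y.2)

/-- Addition on R̄ = R ∪ {−∞}. -/
def eAdd {F L : Type*} [LinearOrder F] [Add L] :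
    Option (F × L) → Option (F × L) → Option (F × L)
  | none, y => y
  | some a, none => some a
  | some a, some b => some (eltAdd a b)

/-- Multiplication on R̄ = R ∪ {−∞}. -/
def eMul {F L : Type*} [Add F] [Mul L] :
    Option (F × L) → Option (F × L) → Option (F × L)
  | some a, some b => some (eltMul a b)
  | _, _ => none

/-- The layer (sorting map) on R̄; the layer of −∞ is 0. -/
def sBar {F L : Type*} [Zero L] (x : Option (F × L)) : L :=
  (x.map Prod.snd).getD 0

/-- The surpassing relation on R̄. -/
def eSurp {F L : Type*} [LinearOrder F] [Add L] [Zero L]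
    (x y : Option (F × L)) : Prop :=
  ∃ z : Option (F × L), sBar z = 0 ∧ x = eAdd y z

/-- Finite sums in R̄ (the result is independent of the enumeration order since
`eAdd` is commutative and associative with identity −∞). -/
noncomputable def eSumF {F L α : Type*} [Fintype α] [LinearOrder F] [Add L]
    (f : α → Option (F × L)) : Option (F × L) :=
  ((Finset.univ : Finset α).toList.map f).foldr eAdd none

/-- Finite products in R̄. -/
def eProd {F L : Type*} [Zero F] [Add F] [One L] [Mul L] {k : ℕ}
    (f : Fin k → Option (F × L)) : Option (F × L) :=
  (List.ofFn f).foldr eMul (some ((0 : F), (1 : L)))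

/-- The ELT determinant, with sgn(σ) interpreted as the layer element (0, ±1). -/
noncomputable def eltDet {F L : Type*} [AddCommGroup F] [LinearOrder F] [IsOrderedAddMonoid F] [CommRing L] {n : ℕ}
    (A : Matrix (Fin n) (Fin n) (Option (F × L))) : Option (F × L) :=
  eSumF fun σ : Equiv.Perm (Fin n) =>
    eMul (some ((0 : F), ((Equiv.Perm.sign σ : ℤ) : L))) (eProd fun i => A i (σ i))

/-- Matrix multiplication over R̄. -/
noncomputable def eMatMul {F L : Type*} [AddCommGroup F] [LinearOrder F] [IsOrderedAddMonoid F] [CommRing L] {n : ℕ}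
    (A B : Matrix (Fin n) (Fin n) (Option (F × L))) :
    Matrix (Fin n) (Fin n) (Option (F × L)) :=
  fun i j => eSumF fun k => eMul (A i k) (B k j)

/-- The identity matrix over R̄. -/
def eId {F L : Type*} [AddCommGroup F] [LinearOrder F] [IsOrderedAddMonoid F] [CommRing L] (n : ℕ) :
    Matrix (Fin n) (Fin n) (Option (F × L)) :=
  fun i j => if i = j then some ((0 : F), (1 : L)) else none

section
variable {F L : Type*} [AddCommGroup F] [LinearOrder F] [IsOrderedAddMonoid F] [CommRing L]

lemma eltAdd_comm (x y : F × L) : eltAdd x y = eltAdd y x := by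
  unfold eltAdd
  rcases lt_trichotomy x.1 y.1 with h | h | h
  · simp [h, lt_asymm h]
  · simp [h, lt_irrefl, add_comm]
  · simp [h, lt_asymm h]

lemma eltAdd_assoc (x y z : F × L) : eltAdd (eltAdd x y) z = eltAdd x (eltAdd y z) := by
  unfold eltAdd
  rcases lt_trichotomy x.1 y.1 with h1 | h1 | h1 <;> rcases lt_trichotomy y.1 z.1 with h2 | h2 | h2
  · simp [h1, h2, h1.trans h2, lt_asymm h1, lt_asymm h2, lt_asymm (h1.trans h2)]
  · have h3 : x.1 < z.1 := h2 ▸ h1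
    simp [h1, lt_asymm h1, h2, lt_irrefl, h3, lt_asymm h3]
  · simp [h1, lt_asymm h1, h2]
  · simp [h1, lt_irrefl, h2, lt_asymm h2]
  · simp [h1, h2, lt_irrefl, add_assoc]
  · have h3 : z.1 < x.1 := h1 ▸ h2
    simp [h1, h2, lt_irrefl, lt_asymm h2, h3]
  · simp [h1, h2, lt_asymm h1, lt_asymm h2]
  · have h3 : z.1 < x.1 := h2 ▸ h1
    simp [h1, lt_asymm h1, h2, lt_irrefl, h3]
  · have h3 : z.1 < x.1 := h2.trans h1
    simp [h1, h2, h3, lt_asymm h1, lt_asymm h2, lt_asymm h3]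

instance : Add (Option (F × L)) := ⟨eAdd⟩
instance : Mul (Option (F × L)) := ⟨eMul⟩
instance : Zero (Option (F × L)) := ⟨none⟩
instance : One (Option (F × L)) := ⟨some ((0 : F), (1 : L))⟩

lemma eAdd_def (a b : Option (F × L)) : a + b = eAdd a b := rfl
lemma eMul_def (a b : Option (F × L)) : a * b = eMul a b := rfl
lemma eZero_def : (0 : Option (F × L)) = none := rfl
lemma eOne_def : (1 : Option (F × L)) = some ((0 : F), (1 : L)) := rfl

set_option maxHeartbeats 1000000 in
noncomputable instance instELT : CommSemiring (Option (F × L)) where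
  add_assoc a b c := by
    cases a <;> cases b <;> cases c <;> simp [eAdd_def, eAdd, eltAdd_assoc]
  zero_add a := by cases a <;> rfl
  add_zero a := by cases a <;> rfl
  add_comm a b := by cases a <;> cases b <;> simp [eAdd_def, eAdd, eltAdd_comm]
  nsmul := nsmulRec
  mul_assoc a b c := by
    cases a <;> cases b <;> cases c <;> simp [eMul_def, eMul, eltMul, add_assoc, mul_assoc]
  one_mul a := by cases a <;> simp [eMul_def, eOne_def, eMul, eltMul]
  mul_one a := by cases a <;> simp [eMul_def, eOne_def, eMul, eltMul]
  mul_comm a b := by cases a <;> cases b <;> simp [eMul_def, eMul, eltMul, add_comm, mul_comm]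
  zero_mul a := by cases a <;> rfl
  mul_zero a := by cases a <;> rfl
  left_distrib a b c := by
    cases a with
    | none => cases b <;> cases c <;> rfl
    | some x =>
      cases b with
      | none => cases c <;> rfl
      | some y =>
        cases c with
        | none => rfl
        | some z =>
          show some (eltMul x (eltAdd y z)) = some (eltAdd (eltMul x y) (eltMul x z))
          unfold eltAdd eltMul
          rcases lt_trichotomy y.1 z.1 with h | h | h
          · simp [h, lt_asymm h, add_lt_add_iff_left]
          · simp [h, lt_irrefl, mul_add]
          · simp [h, lt_asymm h, add_lt_add_iff_left]
  right_distrib a b c := by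
    cases a with
    | none => cases b <;> cases c <;> rfl
    | some x =>
      cases b with
      | none => cases c <;> rfl
      | some y =>
        cases c with
        | none => rfl
        | some z =>
          show some (eltMul (eltAdd x y) z) = some (eltAdd (eltMul x z) (eltMul y z))
          unfold eltAdd eltMul
          rcases lt_trichotomy x.1 y.1 with h | h | h
          · simp [h, lt_asymm h, add_lt_add_iff_right]
          · simp [h, lt_irrefl, add_mul]
          · simp [h, lt_asymm h, add_lt_add_iff_right]

lemma eAdd_eq_zero_iff (a b : Option (F × L)) : a + b = 0 ↔ a = 0 ∧ b = 0 := by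
  cases a <;> cases b <;> simp [eAdd_def, eZero_def, eAdd]

lemma eMul_eq_zero_iff (a b : Option (F × L)) : a * b = 0 ↔ a = 0 ∨ b = 0 := by
  cases a <;> cases b <;> simp [eMul_def, eZero_def, eMul]
end

section
variable {F L : Type*} [AddCommGroup F] [LinearOrder F] [IsOrderedAddMonoid F] [CommRing L]

lemma eSumF_eq {α : Type*} [Fintype α] (f : α → Option (F × L)) :
    eSumF f = ∑ x, f x := by
  rw [eSumF, ← Finset.sum_map_toList, List.sum_eq_foldr]
  rfl

lemma eProd_eq {k : ℕ} (f : Fin k → Option (F × L)) :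
    eProd f = ∏ i, f i := by
  rw [eProd, ← List.prod_ofFn, List.prod_eq_foldr]
  rfl

lemma esum_eq_zero_iff {α : Type*} (s : Finset α) (f : α → Option (F × L)) :
    ∑ x ∈ s, f x = 0 ↔ ∀ x ∈ s, f x = 0 := by
  induction s using Finset.cons_induction with
  | empty => simp
  | cons a s ha ih => simp [Finset.sum_cons, eAdd_eq_zero_iff, ih]

lemma eOne_ne_zero : (1 : Option (F × L)) ≠ 0 := by simp [eOne_def, eZero_def]
end

/-- If B is invertible in the monoid of matrices over R̄, then
det(AB) = det(A)·det(B). -/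
theorem eltDet_mul_of_invertible {F L : Type*} [AddCommGroup F] [LinearOrder F] [IsOrderedAddMonoid F]
    [CommRing L] {n : ℕ} (A B : Matrix (Fin n) (Fin n) (Option (F × L)))
    (hB : ∃ C : Matrix (Fin n) (Fin n) (Option (F × L)),
      eMatMul B C = eId n ∧ eMatMul C B = eId n) :
    eltDet (eMatMul A B) = eMul (eltDet A) (eltDet B) := by
  classical
  obtain ⟨C, hBC, hCB⟩ := hB
  have hmm : ∀ (X Y : Matrix (Fin n) (Fin n) (Option (F × L))) i j,
      eMatMul X Y i j = ∑ k, X i k * Y k j := by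
    intro X Y i j
    show eSumF _ = _
    rw [eSumF_eq]
    simp only [← eMul_def]
  have hdet : ∀ M : Matrix (Fin n) (Fin n) (Option (F × L)),
      eltDet M = ∑ τ : Equiv.Perm (Fin n),
        (some ((0 : F), ((Equiv.Perm.sign τ : ℤ) : L)) : Option (F × L)) * ∏ i, M i (τ i) := by
    intro M
    show eSumF _ = _
    rw [eSumF_eq]
    refine Finset.sum_congr rfl fun τ _ => ?_
    rw [eProd_eq, ← eMul_def]
  -- off-diagonal entries vanish
  have hoffBC : ∀ i j, i ≠ j → ∀ k, B i k = 0 ∨ C k j = 0 := by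
    intro i j hij k
    have h1 : eMatMul B C i j = 0 := by rw [hBC]; simp [eId, hij, eZero_def]
    rw [hmm] at h1
    have := (esum_eq_zero_iff _ _).mp h1 k (Finset.mem_univ k)
    exact (eMul_eq_zero_iff _ _).mp this
  have hoffCB : ∀ k l, k ≠ l → ∀ m, C k m = 0 ∨ B m l = 0 := by
    intro k l hkl m
    have h1 : eMatMul C B k l = 0 := by rw [hCB]; simp [eId, hkl, eZero_def]
    rw [hmm] at h1
    have := (esum_eq_zero_iff _ _).mp h1 m (Finset.mem_univ m)
    exact (eMul_eq_zero_iff _ _).mp this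
  -- each row of B has a "witness" column
  have hrow : ∀ i, ∃ k, B i k ≠ 0 ∧ C k i ≠ 0 := by
    intro i
    by_contra h
    push_neg at h
    have h1 : eMatMul B C i i = 1 := by rw [hBC]; simp [eId, eOne_def]
    rw [hmm] at h1
    have h0 : (∑ k, B i k * C k i) = 0 := by
      rw [esum_eq_zero_iff]
      intro k _
      rw [eMul_eq_zero_iff]
      by_cases hb : B i k = 0
      · exact Or.inl hb
      · exact Or.inr (h k hb)
    rw [h1] at h0
    exact eOne_ne_zero h0
  choose s hs1 hs2 using hrow
  have hinj : Function.Injective s := by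
    intro i j hij
    by_contra hne
    rcases hoffBC i j hne (s j) with h' | h'
    · exact hs1 i (by rw [hij]; exact h')
    · exact hs2 j h'
  let σ : Equiv.Perm (Fin n) := Equiv.ofBijective s (Finite.injective_iff_bijective.mp hinj)
  have hσ : ∀ i, σ i = s i := fun i => rfl
  set b : Fin n → Option (F × L) := fun i => B i (σ i) with hbdef
  have hbne : ∀ i, b i ≠ 0 := fun i => by show B i (σ i) ≠ 0; rw [hσ i]; exact hs1 i
  have hBoff : ∀ i k, k ≠ σ i → B i k = 0 := by
    intro i k hk
    rcases hoffCB (σ i) k (fun h => hk h.symm) i with h | h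
    · exact absurd h (by rw [hσ i]; exact hs2 i)
    · exact h
  -- the entries of A*B
  have hABentry : ∀ i j, eMatMul A B i j = A i (σ.symm j) * b (σ.symm j) := by
    intro i j
    rw [hmm]
    rw [Finset.sum_eq_single (σ.symm j)]
    · congr 1
      rw [hbdef]
      congr 1
      exact (Equiv.apply_symm_apply σ j).symm
    · intro k _ hk
      have : B k j = 0 := by
        apply hBoff
        intro hj
        exact hk (by rw [hj, Equiv.symm_apply_apply])
      rw [this, mul_zero]
    · intro h; exact absurd (Finset.mem_univ _) h
  -- determinant of B
  have hdetB : eltDet B =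
      (some ((0 : F), ((Equiv.Perm.sign σ : ℤ) : L)) : Option (F × L)) * ∏ i, b i := by
    rw [hdet]
    refine Finset.sum_eq_single σ ?_ ?_
    · intro τ _ hτ
      have : ¬ ∀ i, τ i = σ i := fun h => hτ (Equiv.ext h)
      push_neg at this
      obtain ⟨i, hi⟩ := this
      rw [Finset.prod_eq_zero (Finset.mem_univ i) (hBoff i (τ i) hi), mul_zero]
    · intro h; exact absurd (Finset.mem_univ _) h
  -- sign is multiplicative at the layer level
  have hsg : ∀ τ π : Equiv.Perm (Fin n),
      (some ((0 : F), ((Equiv.Perm.sign (τ * π) : ℤ) : L)) : Option (F × L)) =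
        some ((0 : F), ((Equiv.Perm.sign τ : ℤ) : L)) *
          some ((0 : F), ((Equiv.Perm.sign π : ℤ) : L)) := by
    intro τ π
    rw [eMul_def]
    simp [eMul, eltMul, map_mul, Units.val_mul, Int.cast_mul]
  -- put it all together
  rw [← eMul_def, hdet, hdet, hdetB]
  rw [Finset.sum_mul]
  rw [← Fintype.sum_equiv (Equiv.mulLeft σ)
      (fun π => (some ((0 : F), ((Equiv.Perm.sign ((Equiv.mulLeft σ) π) : ℤ) : L)) : Option (F × L)) *
        ∏ i, eMatMul A B i (((Equiv.mulLeft σ) π) i))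
      (fun τ => (some ((0 : F), ((Equiv.Perm.sign τ : ℤ) : L)) : Option (F × L)) *
        ∏ i, eMatMul A B i (τ i)) (fun π => rfl)]
  refine Finset.sum_congr rfl fun π _ => ?_
  have hprod : ∏ i, eMatMul A B i (((Equiv.mulLeft σ) π) i) =
      (∏ i, A i (π i)) * ∏ i, b i := by
    have h1 : ∀ i, eMatMul A B i (((Equiv.mulLeft σ) π) i) = A i (π i) * b (π i) := by
      intro i
      rw [hABentry]
      have : σ.symm (((Equiv.mulLeft σ) π) i) = π i := by
        simp [Equiv.Perm.mul_apply]
      rw [this]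
    rw [Finset.prod_congr rfl fun i _ => h1 i, Finset.prod_mul_distrib]
    congr 1
    exact Equiv.prod_comp π b
  rw [hprod]
  rw [show (Equiv.mulLeft σ) π = σ * π from rfl, hsg σ π]
  ring
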